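/- Let S be a generalized telescopic semigroup in ℤ² spanned by {α_i}_{i=1}^r, where α₁, ..., α_{r-1} lie on a line L through the origin, α_r ∉ L, and the semigroup generated by α₁,...,α_{r-1} is isomorphic (as ordered semigroup) to a telescopic semigroup ⟨β₁,...,β_{r-1}⟩ via α_i ↦ β_i. Then every α ∈ S can be written uniquely as α = Σ_{i=1}^r a_i α_i with a₁, a_r ≥ 0 and 0 ≤ a_i < gcd(β₁,...,β_{i-1})/gcd(β₁,...,β_i) for 2 ≤ i ≤ r−1. -/

import Mathlib

/-- `dtel α i = gcd(α₁, …, α_i)` (generators indexed from 1). -/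
def dtel (α : ℕ → ℕ) (i : ℕ) : ℕ := (Finset.Icc 1 i).gcd α

/-- A telescopic sequence `α₁, …, α_r` of positive integers. -/
def IsTelescopic (r : ℕ) (α : ℕ → ℕ) : Prop :=
  (∀ i, 1 ≤ i → i ≤ r → 0 < α i) ∧
  dtel α r = 1 ∧
  ∀ i, 2 ≤ i → i ≤ r →
    α i / dtel α i ∈
      AddSubmonoid.closure {x : ℕ | ∃ j, 1 ≤ j ∧ j < i ∧ x = α j / dtel α (i - 1)}

lemma mem_closure_sum {M : Type*} [AddCommMonoid M] (k : ℕ) (f : ℕ → M) (x : M)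
    (hx : x ∈ AddSubmonoid.closure {y : M | ∃ j, 1 ≤ j ∧ j ≤ k ∧ y = f j}) :
    ∃ t : ℕ → ℕ, x = ∑ j ∈ Finset.Icc 1 k, t j • f j := by
  induction hx using AddSubmonoid.closure_induction with
  | mem y hy =>
    obtain ⟨j, h1, h2, rfl⟩ := hy
    refine ⟨fun i => if i = j then 1 else 0, ?_⟩
    rw [Finset.sum_eq_single_of_mem j (Finset.mem_Icc.mpr ⟨h1, h2⟩)]
    · simp
    · intro b _ hb; simp [hb]
  | zero => exact ⟨0, by simp⟩
  | add x y _ _ hx hy =>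
    obtain ⟨t, rfl⟩ := hx; obtain ⟨s, rfl⟩ := hy
    exact ⟨t + s, by rw [← Finset.sum_add_distrib]; simp [add_smul]⟩

lemma dtel_dvd (β : ℕ → ℕ) {i j : ℕ} (h1 : 1 ≤ j) (h2 : j ≤ i) : dtel β i ∣ β j :=
  Finset.gcd_dvd (Finset.mem_Icc.mpr ⟨h1, h2⟩)

lemma dtel_succ (β : ℕ → ℕ) {i : ℕ} (hi : 1 ≤ i) :
    dtel β i = Nat.gcd (β i) (dtel β (i-1)) := by
  unfold dtel
  rw [show Finset.Icc 1 i = insert i (Finset.Icc 1 (i-1)) by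
    ext j; simp only [Finset.mem_Icc, Finset.mem_insert]; omega, Finset.gcd_insert]
  rfl

lemma dtel_pos (β : ℕ → ℕ) (hpos : 0 < β 1) {i : ℕ} (hi : 1 ≤ i) : 0 < dtel β i :=
  Nat.pos_of_dvd_of_pos (dtel_dvd β le_rfl hi) hpos

lemma dtel_dvd_pred (β : ℕ → ℕ) {i : ℕ} (hi : 1 ≤ i) : dtel β i ∣ dtel β (i-1) := by
  rw [dtel_succ β hi]; exact Nat.gcd_dvd_right _ _

/-- Key step: `(d(k-1)/d k) * β k` is a ℕ-combination of `β 1, …, β (k-1)`. -/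
lemma tel_step (m : ℕ) (β : ℕ → ℕ) (hβ : IsTelescopic m β) {k : ℕ} (h2 : 2 ≤ k)
    (hk : k ≤ m) : ∃ t : ℕ → ℕ,
    (dtel β (k-1) / dtel β k) * β k = ∑ j ∈ Finset.Icc 1 (k-1), t j * β j := by
  obtain ⟨hpos, -, htel⟩ := hβ
  have hmem := htel k h2 hk
  have hset : {x : ℕ | ∃ j, 1 ≤ j ∧ j < k ∧ x = β j / dtel β (k - 1)} =
      {x : ℕ | ∃ j, 1 ≤ j ∧ j ≤ k - 1 ∧ x = β j / dtel β (k - 1)} := by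
    ext x; constructor <;> rintro ⟨j, hj1, hj2, rfl⟩ <;> exact ⟨j, hj1, by omega, rfl⟩
  rw [hset] at hmem
  obtain ⟨t, ht⟩ := mem_closure_sum (k-1) _ _ hmem
  refine ⟨t, ?_⟩
  have hb1 : 0 < β 1 := hpos 1 le_rfl (by omega)
  have hdk : 0 < dtel β k := dtel_pos β hb1 (by omega)
  have hdk1 : 0 < dtel β (k-1) := dtel_pos β hb1 (by omega)
  have hdd : dtel β k ∣ dtel β (k-1) := dtel_dvd_pred β (by omega)
  have hdb : dtel β k ∣ β k := dtel_dvd β (by omega) le_rfl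
  have key : dtel β (k-1) * (β k / dtel β k) = (dtel β (k-1) / dtel β k) * β k := by
    obtain ⟨e, he⟩ := hdd
    obtain ⟨g, hg⟩ := hdb
    rw [he, hg, Nat.mul_div_cancel_left _ hdk, Nat.mul_div_cancel_left _ hdk]
    ring
  rw [← key, ht, Finset.mul_sum]
  refine Finset.sum_congr rfl fun j hj => ?_
  have hj' := Finset.mem_Icc.mp hj
  have : dtel β (k-1) ∣ β j := dtel_dvd β hj'.1 hj'.2
  rw [smul_eq_mul, ← mul_assoc, mul_comm (dtel β (k-1)) (t j), mul_assoc,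
    Nat.mul_div_cancel' this]

/-- Existence of bounded representation in a telescopic numerical semigroup. -/
lemma tel_exists (m : ℕ) (β : ℕ → ℕ) (hβ : IsTelescopic m β) :
    ∀ i, i ≤ m → ∀ c : ℕ → ℕ, ∃ a : ℕ → ℕ,
      (∀ j, ¬(1 ≤ j ∧ j ≤ i) → a j = 0) ∧
      (∀ j, 2 ≤ j → j ≤ i → a j < dtel β (j-1) / dtel β j) ∧
      ∑ j ∈ Finset.Icc 1 i, a j * β j = ∑ j ∈ Finset.Icc 1 i, c j * β j := by
  intro i
  induction i with
  | zero => intro _ c; exact ⟨0, fun j _ => rfl, fun j h1 h2 => by omega, by simp⟩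
  | succ i ih =>
    intro hi c
    rcases Nat.eq_zero_or_pos i with rfl | hipos
    · refine ⟨fun j => if j = 1 then c 1 else 0, ?_, ?_, ?_⟩
      · intro j hj; simp only [if_neg (by omega : j ≠ 1)]
      · intro j h1 h2; omega
      · simp
    -- k = i + 1 ≥ 2
    have hb1 : 0 < β 1 := hβ.1 1 le_rfl (by omega)
    set k := i + 1 with hk
    have hdk : 0 < dtel β k := dtel_pos β hb1 (by omega)
    have hdk1 : 0 < dtel β (k-1) := dtel_pos β hb1 (by omega)
    have hdd : dtel β k ∣ dtel β (k-1) := dtel_dvd_pred β (by omega)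
    set e := dtel β (k-1) / dtel β k with he
    have hepos : 0 < e := Nat.div_pos (Nat.le_of_dvd hdk1 hdd) hdk
    obtain ⟨t, ht⟩ := tel_step m β hβ (by omega : 2 ≤ k) hi
    set q := c k / e with hq
    set s := c k % e with hs
    have hcs : c k = e * q + s := (Nat.div_add_mod (c k) e).symm
    obtain ⟨a', ha'0, ha'b, ha's⟩ := ih (by omega) (fun j => c j + q * t j)
    refine ⟨fun j => if j = k then s else a' j, ?_, ?_, ?_⟩
    · intro j hj
      dsimp only
      rw [if_neg (by omega : j ≠ k)]
      exact ha'0 j (by omega)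
    · intro j h1 h2
      dsimp only
      by_cases hjk : j = k
      · subst hjk; rw [if_pos rfl]; exact Nat.mod_lt _ hepos
      · rw [if_neg hjk]; exact ha'b j h1 (by omega)
    · dsimp only
      rw [Finset.sum_Icc_succ_top (by omega : 1 ≤ i + 1),
        Finset.sum_Icc_succ_top (by omega : 1 ≤ i + 1)]
      have h1 : ∀ j ∈ Finset.Icc 1 i, (if j = k then s else a' j) * β j = a' j * β j := by
        intro j hj; have := Finset.mem_Icc.mp hj; rw [if_neg (by omega)]
      rw [show (i+1) = k from rfl, Finset.sum_congr rfl h1, if_pos rfl, ha's]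
      have hexp : ∑ j ∈ Finset.Icc 1 i, (c j + q * t j) * β j =
          ∑ j ∈ Finset.Icc 1 i, c j * β j + q * ∑ j ∈ Finset.Icc 1 i, t j * β j := by
        rw [Finset.mul_sum, ← Finset.sum_add_distrib]
        exact Finset.sum_congr rfl fun j _ => by ring
      rw [hexp]
      have hki : (k : ℕ) - 1 = i := rfl
      rw [hki] at ht
      rw [← ht, show dtel β i / dtel β k = e from rfl]
      have : q * (e * β k) + s * β k = c k * β k := by rw [hcs]; ring
      omega

/-- Uniqueness of bounded representation in a telescopic numerical semigroup. -/
lemma tel_unique (m : ℕ) (β : ℕ → ℕ) (hβ : IsTelescopic m β) :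
    ∀ i, i ≤ m → ∀ a b : ℕ → ℕ,
      (∀ j, 2 ≤ j → j ≤ i → a j < dtel β (j-1) / dtel β j) →
      (∀ j, 2 ≤ j → j ≤ i → b j < dtel β (j-1) / dtel β j) →
      ∑ j ∈ Finset.Icc 1 i, a j * β j = ∑ j ∈ Finset.Icc 1 i, b j * β j →
      ∀ j, 1 ≤ j → j ≤ i → a j = b j := by
  intro i
  induction i with
  | zero => intro _ a b _ _ _ j h1 h2; omega
  | succ i ih =>
    intro hi a b ha hb heq j hj1 hj2
    have hb1 : 0 < β 1 := hβ.1 1 le_rfl (by omega)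
    set k := i + 1 with hk
    rcases Nat.eq_zero_or_pos i with rfl | hipos
    · -- k = 1
      interval_cases j
      have : Finset.Icc 1 1 = {1} := rfl
      rw [this, Finset.sum_singleton, Finset.sum_singleton] at heq
      exact Nat.eq_of_mul_eq_mul_right hb1 heq
    -- k ≥ 2. First show a k = b k.
    have hdk : 0 < dtel β k := dtel_pos β hb1 (by omega)
    have hdk1 : 0 < dtel β (k-1) := dtel_pos β hb1 (by omega)
    have hdd : dtel β k ∣ dtel β (k-1) := dtel_dvd_pred β (by omega)
    have hdb : dtel β k ∣ β k := dtel_dvd β (by omega) le_rfl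
    obtain ⟨e, he⟩ := hdd
    obtain ⟨g, hg⟩ := hdb
    -- coprimality of e and g
    have hcop : Nat.Coprime e g := by
      have h1 : dtel β k = Nat.gcd (β k) (dtel β (k-1)) := dtel_succ β (by omega)
      rw [hg, he, Nat.gcd_mul_left] at h1
      have : Nat.gcd g e = 1 := by
        nlinarith [Nat.le_of_eq h1, hdk]
      exact Nat.Coprime.symm this
    -- reduce equality mod dtel β (k-1)
    rw [Finset.sum_Icc_succ_top (by omega : 1 ≤ i + 1),
      Finset.sum_Icc_succ_top (by omega : 1 ≤ i + 1)] at heq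
    have hdvdsum : ∀ c : ℕ → ℕ, (dtel β (k-1) : ℤ) ∣ ∑ j ∈ Finset.Icc 1 i, (c j : ℤ) * β j := by
      intro c
      refine Finset.dvd_sum fun j hj => ?_
      have hj' := Finset.mem_Icc.mp hj
      have : dtel β (k-1) ∣ β j := dtel_dvd β hj'.1 (by omega)
      exact Dvd.dvd.mul_left (Int.natCast_dvd_natCast.mpr this) _
    have heqZ : ((∑ j ∈ Finset.Icc 1 i, a j * β j : ℕ) : ℤ) + (a k : ℤ) * β k =
        ((∑ j ∈ Finset.Icc 1 i, b j * β j : ℕ) : ℤ) + (b k : ℤ) * β k := by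
      exact_mod_cast congrArg (Nat.cast : ℕ → ℤ) heq
    have hdvd : (dtel β (k-1) : ℤ) ∣ ((a k : ℤ) - b k) * β k := by
      have h1 : ((∑ j ∈ Finset.Icc 1 i, a j * β j : ℕ) : ℤ) =
          ∑ j ∈ Finset.Icc 1 i, (a j : ℤ) * β j := by push_cast; ring
      have h2 : ((∑ j ∈ Finset.Icc 1 i, b j * β j : ℕ) : ℤ) =
          ∑ j ∈ Finset.Icc 1 i, (b j : ℤ) * β j := by push_cast; ring
      have : ((a k : ℤ) - b k) * β k =
          ∑ j ∈ Finset.Icc 1 i, (b j : ℤ) * β j - ∑ j ∈ Finset.Icc 1 i, (a j : ℤ) * β j := by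
        rw [← h1, ← h2]; linarith [heqZ]
      rw [this]
      exact dvd_sub (hdvdsum b) (hdvdsum a)
    have hedvd : (e : ℤ) ∣ ((a k : ℤ) - b k) * g := by
      have h1 : (dtel β (k-1) : ℤ) = e * dtel β k := by rw [he]; push_cast; ring
      have h2 : (β k : ℤ) = g * dtel β k := by rw [hg]; push_cast; ring
      rw [h1, h2] at hdvd
      have hne : (dtel β k : ℤ) ≠ 0 := by exact_mod_cast hdk.ne'
      have : ((a k : ℤ) - b k) * (g * dtel β k) = (((a k : ℤ) - b k) * g) * dtel β k := by ring
      rw [this] at hdvd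
      exact (mul_dvd_mul_iff_right hne).mp hdvd
    have hecop : IsCoprime (e : ℤ) (g : ℤ) := by
      rw [Int.isCoprime_iff_gcd_eq_one]
      simpa [Int.gcd] using hcop
    have hedvd2 : (e : ℤ) ∣ (a k : ℤ) - b k := hecop.dvd_of_dvd_mul_right hedvd
    have hek : dtel β (k-1) / dtel β k = e := by
      rw [he, Nat.mul_div_cancel_left _ hdk]
    have hak : a k < e := hek ▸ ha k (by omega) le_rfl
    have hbk : b k < e := hek ▸ hb k (by omega) le_rfl
    have habk : a k = b k := by
      have : (a k : ℤ) - b k = 0 := Int.eq_zero_of_abs_lt_dvd hedvd2 (by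
        rw [abs_sub_lt_iff]; constructor <;> [skip; skip] <;> push_cast <;> omega)
      omega
    -- now cancel and use IH
    by_cases hjk : j = k
    · rw [hjk]; exact habk
    · have heq' : ∑ j ∈ Finset.Icc 1 i, a j * β j = ∑ j ∈ Finset.Icc 1 i, b j * β j := by
        have heq2 : (∑ j ∈ Finset.Icc 1 i, a j * β j) + a k * β k
            = (∑ j ∈ Finset.Icc 1 i, b j * β j) + b k * β k := heq
        have hterm : a k * β k = b k * β k := by rw [habk]
        omega
      exact ih (by omega) a b (fun j h1 h2 => ha j h1 (by omega))
        (fun j h1 h2 => hb j h1 (by omega)) heq' j hj1 (by omega)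

/-- unique representation in a generalized telescopic semigroup in ℤ²
(lexicographic order): `α₁, …, α_{r-1}` lie on a line through the origin, `α_r` does not,
and `⟨α₁,…,α_{r-1}⟩` is isomorphic as an ordered semigroup to a telescopic semigroup
`⟨β₁,…,β_{r-1}⟩` via `α_i ↦ β_i`. Then every element of the semigroup spanned by the
`α_i` is uniquely `Σ a_i α_i` with `a₁, a_r ≥ 0` and
`0 ≤ a_i < gcd(β₁,…,β_{i-1})/gcd(β₁,…,β_i)` for `2 ≤ i ≤ r-1`. -/
theorem generalized_telescopic_Z2_unique_representation (r : ℕ) (hr : 2 ≤ r)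
    (α : ℕ → ℤ × ℤ) (β : ℕ → ℕ) (hβ : IsTelescopic (r - 1) β)
    (hline : ∃ u v : ℤ, (u, v) ≠ (0, 0) ∧
      (∀ i, 1 ≤ i → i ≤ r - 1 → u * (α i).1 + v * (α i).2 = 0) ∧
      u * (α r).1 + v * (α r).2 ≠ 0)
    (hwf : Set.IsWF {x : ℤ ×ₗ ℤ |
      ofLex x ∈ AddSubmonoid.closure {y : ℤ × ℤ | ∃ i, 1 ≤ i ∧ i ≤ r ∧ y = α i}})
    (hiso : ∀ a b : ℕ → ℕ,
      (∑ i ∈ Finset.Icc 1 (r - 1), a i • α i = ∑ i ∈ Finset.Icc 1 (r - 1), b i • α i) ↔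
        (∑ i ∈ Finset.Icc 1 (r - 1), a i * β i = ∑ i ∈ Finset.Icc 1 (r - 1), b i * β i))
    (hord : ∀ a b : ℕ → ℕ,
      (toLex (∑ i ∈ Finset.Icc 1 (r - 1), a i • α i) ≤
          toLex (∑ i ∈ Finset.Icc 1 (r - 1), b i • α i)) ↔
        (∑ i ∈ Finset.Icc 1 (r - 1), a i * β i ≤ ∑ i ∈ Finset.Icc 1 (r - 1), b i * β i)) :
    ∀ x ∈ AddSubmonoid.closure {y : ℤ × ℤ | ∃ i, 1 ≤ i ∧ i ≤ r ∧ y = α i},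
      ∃! a : ℕ → ℕ,
        (∀ i, (i = 0 ∨ r < i) → a i = 0) ∧
        (∀ i, 2 ≤ i → i ≤ r - 1 → a i < dtel β (i - 1) / dtel β i) ∧
        x = ∑ i ∈ Finset.Icc 1 r, a i • α i := by
  intro x hx
  obtain ⟨n, rfl⟩ : ∃ n, r = n + 1 := ⟨r - 1, by omega⟩
  simp only [Nat.add_sub_cancel] at hβ hline hiso hord ⊢
  have hn : 1 ≤ n := by omega
  obtain ⟨u, v, -, hαL, hαr⟩ := hline
  -- the linear functional
  set L : ℤ × ℤ →+ ℤ :=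
    { toFun := fun y => u * y.1 + v * y.2
      map_zero' := by simp
      map_add' := by intro p q; simp only [Prod.fst_add, Prod.snd_add]; ring } with hLdef
  have hLα : ∀ i, 1 ≤ i → i ≤ n → L (α i) = 0 := fun i h1 h2 => hαL i h1 h2
  have key : ∀ a : ℕ → ℕ, L (∑ i ∈ Finset.Icc 1 (n+1), a i • α i) =
      (a (n+1) : ℤ) * L (α (n+1)) := by
    intro a
    rw [map_sum, Finset.sum_Icc_succ_top (by omega : 1 ≤ n + 1)]
    have h0 : ∑ i ∈ Finset.Icc 1 n, L (a i • α i) = 0 :=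
      Finset.sum_eq_zero fun i hi => by
        have hi' := Finset.mem_Icc.mp hi
        rw [map_nsmul, hLα i hi'.1 hi'.2, smul_zero]
    rw [h0, zero_add, map_nsmul, nsmul_eq_mul]
  -- uniqueness of representations
  have uniq : ∀ a b : ℕ → ℕ,
      (∀ i, (i = 0 ∨ n + 1 < i) → a i = 0) →
      (∀ i, 2 ≤ i → i ≤ n → a i < dtel β (i - 1) / dtel β i) →
      (∀ i, (i = 0 ∨ n + 1 < i) → b i = 0) →
      (∀ i, 2 ≤ i → i ≤ n → b i < dtel β (i - 1) / dtel β i) →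
      (∑ i ∈ Finset.Icc 1 (n+1), a i • α i = ∑ i ∈ Finset.Icc 1 (n+1), b i • α i) →
      a = b := by
    intro a b ha0 hab hb0 hbb hsum
    have htop : a (n+1) = b (n+1) := by
      have h1 := key a
      have h2 := key b
      rw [hsum] at h1
      have := mul_right_cancel₀ hαr (h1.symm.trans h2)
      exact_mod_cast this
    have hcancel : ∑ i ∈ Finset.Icc 1 n, a i • α i = ∑ i ∈ Finset.Icc 1 n, b i • α i := by
      rw [Finset.sum_Icc_succ_top (by omega : 1 ≤ n + 1),
        Finset.sum_Icc_succ_top (by omega : 1 ≤ n + 1), htop] at hsum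
      exact add_right_cancel hsum
    have hβsum := (hiso a b).mp hcancel
    have hmid := tel_unique n β hβ n le_rfl a b hab hbb hβsum
    funext i
    rcases Nat.lt_or_ge i 1 with h | h
    · rw [ha0 i (by omega), hb0 i (by omega)]
    rcases Nat.lt_or_ge i (n+1) with h2 | h2
    · exact hmid i h (by omega)
    rcases Nat.eq_or_lt_of_le h2 with h3 | h3
    · rw [← h3]; exact htop
    · rw [ha0 i (by omega), hb0 i (by omega)]
  -- existence
  obtain ⟨t, htx⟩ := mem_closure_sum (n+1) α x hx
  obtain ⟨a', ha'0, ha'b, ha's⟩ := tel_exists n β hβ n le_rfl t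
  set A : ℕ → ℕ := fun i => if i = n + 1 then t (n+1) else a' i with hA
  have hA0 : ∀ i, (i = 0 ∨ n + 1 < i) → A i = 0 := by
    intro i hi
    rw [hA]; dsimp only
    rw [if_neg (by omega : i ≠ n + 1)]
    exact ha'0 i (by omega)
  have hAb : ∀ i, 2 ≤ i → i ≤ n → A i < dtel β (i - 1) / dtel β i := by
    intro i h1 h2
    rw [hA]; dsimp only
    rw [if_neg (by omega : i ≠ n + 1)]
    exact ha'b i h1 h2
  have hAx : x = ∑ i ∈ Finset.Icc 1 (n+1), A i • α i := by
    rw [htx, Finset.sum_Icc_succ_top (by omega : 1 ≤ n + 1),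
      Finset.sum_Icc_succ_top (by omega : 1 ≤ n + 1)]
    have hmidA : ∑ i ∈ Finset.Icc 1 n, A i • α i = ∑ i ∈ Finset.Icc 1 n, a' i • α i := by
      refine Finset.sum_congr rfl fun i hi => ?_
      have hi' := Finset.mem_Icc.mp hi
      rw [hA]; dsimp only
      rw [if_neg (by omega : i ≠ n + 1)]
    rw [hmidA, (hiso a' t).mpr ha's]
    congr 1
    rw [hA]; dsimp only
    rw [if_pos rfl]
  refine ⟨A, ⟨hA0, hAb, hAx⟩, ?_⟩
  rintro y ⟨hy0, hyb, hyx⟩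
  exact uniq y A hy0 hyb hA0 hAb (by rw [← hyx, ← hAx])
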